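/- Let P = {x ∈ ℝⁿ : x ≥ 0, Ax = b} be a compact polytope with vertex set V(P) ⊆ {0,1}ⁿ. Let Q : ℝⁿ → ℝ be convex and differentiable, and let x*, y ∈ P. Suppose: (i) x* = Σ_{j=1}^{n*} δ_j u_j where δ is a probability vector and u₁,…,u_{n*} ∈ V(P); (ii) there exist z ∈ P and Δ_j ∈ [0, δ_j] (j = 1,…,n*) with y = Σ_j (δ_j − Δ_j)u_j + (Σ_j Δ_j)·z, Σ_j Δ_j ≤ √(n*)·‖y − x*‖, and z_k = 0 whenever y_k = 0; (iii) w⁺ minimizes w ↦ ⟨w, ∇Q(y)⟩ over V(P); (iv) w⁻ maximizes w ↦ ⟨w, ∇Q(y)⟩ over {w ∈ V(P) : w_k = 0 whenever y_k = 0}, and each u_j as well as every vertex in a convex decomposition of z lies in the domain of this maximization as appropriate; (v) ‖y − x*‖² ≤ (2/α)·(F(y) − F*) for some α > 0 and a function F with minimum value F* = F(x*); (vi) F(y) − F* ≤ (Q(y) − Q(x*)) + (β₂/3)·‖x̄ − x*‖³ for some β₂ ≥ 0 and x̄ ∈ ℝⁿ; and (vii) Q(y) − Q(x*) ≥ (β₂/3)·‖x̄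 − x*‖³. Then ⟨w⁻ − w⁺, ∇Q(y)⟩ ≥ √((α/(4n*))·(Q(y) − Q(x*))). -/

import Mathlib

open RealInnerProductSpace

/-- Lemma `dicg:ie`, key inner-product bound for the
decomposition-invariant conditional gradient step:
`⟨w⁻ − w⁺, ∇Q(y)⟩ ≥ √((α/(4n*))·(Q(y) − Q(x*)))`. -/
lemma grad_ineq_aux {E : Type*} [NormedAddCommGroup E] [InnerProductSpace ℝ E]
    [CompleteSpace E]
    (Q : E → ℝ) (hc : ConvexOn ℝ Set.univ Q) (hd : Differentiable ℝ Q) (x y : E) :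
    Q y - Q x ≤ ⟪gradient Q y, y - x⟫ := by
  set g : ℝ → ℝ := fun t => Q (y + t • (x - y)) with hgdef
  have hline : HasDerivAt (fun t : ℝ => y + t • (x - y)) (x - y) 0 := by
    simpa using ((hasDerivAt_id (0:ℝ)).smul_const (x - y)).const_add y
  have h0 : y + (0:ℝ) • (x - y) = y := by simp
  have hg : HasDerivAt g (fderiv ℝ Q y (x - y)) 0 := by
    have hf : HasFDerivAt Q (fderiv ℝ Q y) (y + (0:ℝ) • (x - y)) := by
      rw [h0]; exact (hd y).hasFDerivAt
    exact hf.comp_hasDerivAt 0 hline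
  have hslope : ∀ t ∈ Set.Ioc (0:ℝ) 1, slope g 0 t ≤ Q x - Q y := by
    intro t ht
    have hconv : Q ((1 - t) • y + t • x) ≤ (1 - t) * Q y + t * Q x :=
      hc.2 (Set.mem_univ y) (Set.mem_univ x) (by linarith [ht.2]) ht.1.le (by ring)
    have hpt : (1 - t) • y + t • x = y + t • (x - y) := by module
    have hgt : g t ≤ (1 - t) * Q y + t * Q x := by
      rw [hgdef]; simpa [hpt] using hconv
    have hg0 : g 0 = Q y := by simp [hgdef]
    rw [slope_def_field, sub_zero, div_le_iff₀ ht.1]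
    nlinarith [ht.1]
  have htend : Filter.Tendsto (slope g 0) (nhdsWithin 0 (Set.Ioi 0)) (nhds (fderiv ℝ Q y (x - y))) := by
    have := hasDerivAt_iff_tendsto_slope.mp hg
    exact this.mono_left (nhdsWithin_mono 0 (fun t ht => ne_of_gt ht))
  have hev : ∀ᶠ t in nhdsWithin 0 (Set.Ioi 0), slope g 0 t ≤ Q x - Q y := by
    filter_upwards [Ioc_mem_nhdsGT_of_mem (Set.left_mem_Ico.mpr one_pos)] with t ht
    exact hslope t ht
  have hlim : fderiv ℝ Q y (x - y) ≤ Q x - Q y :=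
    le_of_tendsto htend hev
  have hinner : ⟪gradient Q y, x - y⟫ = fderiv ℝ Q y (x - y) := by
    rw [gradient]
    rw [← InnerProductSpace.toDual_apply_apply]
    simp
  have h2 : ⟪gradient Q y, y - x⟫ = - ⟪gradient Q y, x - y⟫ := by
    rw [← inner_neg_right]; congr 1; abel
  rw [h2, hinner]
  linarith

theorem stmt_17
    (n m nstar : ℕ) (A : Matrix (Fin m) (Fin n) ℝ) (b : Fin m → ℝ)
    (P : Set (EuclideanSpace ℝ (Fin n)))
    (hP : P = {x : EuclideanSpace ℝ (Fin n) | (∀ i, 0 ≤ x i) ∧ A.mulVec x = b})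
    (hPcomp : IsCompact P)
    (V : Set (EuclideanSpace ℝ (Fin n)))
    (hV : V = Set.extremePoints ℝ P)
    (hV01 : ∀ w ∈ V, ∀ i, w i = 0 ∨ w i = 1)
    (Q : EuclideanSpace ℝ (Fin n) → ℝ)
    (hQconv : ConvexOn ℝ Set.univ Q) (hQdiff : Differentiable ℝ Q)
    (xs y : EuclideanSpace ℝ (Fin n)) (hxsP : xs ∈ P) (hyP : y ∈ P)
    -- (i) convex decomposition of x* into n* vertices
    (δ : Fin nstar → ℝ) (u : Fin nstar → EuclideanSpace ℝ (Fin n))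
    (hδ0 : ∀ j, 0 ≤ δ j) (hδsum : ∑ j, δ j = 1) (huV : ∀ j, u j ∈ V)
    (hxs_dec : xs = ∑ j, δ j • u j)
    -- (ii) decomposition of y relative to x*
    (z : EuclideanSpace ℝ (Fin n)) (hzP : z ∈ P)
    (Δ : Fin nstar → ℝ) (hΔ : ∀ j, 0 ≤ Δ j ∧ Δ j ≤ δ j)
    (hy_dec : y = (∑ j, (δ j - Δ j) • u j) + (∑ j, Δ j) • z)
    (hΔsum : ∑ j, Δ j ≤ Real.sqrt (nstar : ℝ) * ‖y - xs‖)
    (hz_supp : ∀ k, y k = 0 → z k = 0)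
    -- (iii) Frank-Wolfe direction
    (wp : EuclideanSpace ℝ (Fin n)) (hwpV : wp ∈ V)
    (hwp : ∀ w ∈ V, ⟪wp, gradient Q y⟫ ≤ ⟪w, gradient Q y⟫)
    -- (iv) away direction over vertices vanishing wherever y vanishes
    (wm : EuclideanSpace ℝ (Fin n)) (hwmV : wm ∈ V)
    (hwm0 : ∀ k, y k = 0 → wm k = 0)
    (hwm : ∀ w ∈ V, (∀ k, y k = 0 → w k = 0) → ⟪w, gradient Q y⟫ ≤ ⟪wm, gradient Q y⟫)
    (hz_hull : z ∈ convexHull ℝ {w | w ∈ V ∧ ∀ k, y k = 0 → w k = 0})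
    -- (v) quadratic growth for F, with minimum value F* = F(x*)
    (F : EuclideanSpace ℝ (Fin n) → ℝ) (α : ℝ) (hα : 0 < α)
    (hFmin : ∀ v ∈ P, F xs ≤ F v)
    (hQG : ‖y - xs‖ ^ 2 ≤ (2 / α) * (F y - F xs))
    -- (vi), (vii)
    (β₂ : ℝ) (hβ₂ : 0 ≤ β₂) (xb : EuclideanSpace ℝ (Fin n))
    (hFQ : F y - F xs ≤ (Q y - Q xs) + (β₂ / 3) * ‖xb - xs‖ ^ 3)
    (hgap : (β₂ / 3) * ‖xb - xs‖ ^ 3 ≤ Q y - Q xs) :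
    Real.sqrt ((α / (4 * (nstar : ℝ))) * (Q y - Q xs)) ≤ ⟪wm - wp, gradient Q y⟫ := by
  classical
  set gr := gradient Q y with hgr
  set G : ℝ := ⟪wm - wp, gr⟫ with hGdef
  -- nstar positive
  have hn : 0 < (nstar : ℝ) := by
    rcases Nat.eq_zero_or_pos nstar with h | h
    · exfalso; subst h; simpa using hδsum
    · exact_mod_cast h
  -- g := gap
  set g : ℝ := Q y - Q xs with hgdef
  have hg0 : 0 ≤ g := le_trans (by positivity) hgap
  -- G nonneg
  have hG0 : 0 ≤ G := by
    have := hwp wm hwmV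
    rw [hGdef, inner_sub_left]; linarith
  -- z bound
  have hz_in : ⟪z, gr⟫ ≤ ⟪wm, gr⟫ := by
    have hconv : Convex ℝ {w : EuclideanSpace ℝ (Fin n) | ⟪w, gr⟫ ≤ ⟪wm, gr⟫} := by
      exact convex_halfSpace_le (𝕜 := ℝ)
        (f := fun w : EuclideanSpace ℝ (Fin n) => ⟪w, gr⟫)
        ⟨fun a b => inner_add_left _ _ _, fun c a => real_inner_smul_left a gr c⟩ _
    have hsub : {w : EuclideanSpace ℝ (Fin n) | w ∈ V ∧ ∀ k, y k = 0 → w k = 0}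
        ⊆ {w | ⟪w, gr⟫ ≤ ⟪wm, gr⟫} := fun w hw => hwm w hw.1 hw.2
    exact convexHull_min hsub hconv hz_hull
  -- decomposition of y - xs
  have hyxs : y - xs = ∑ j, Δ j • (z - u j) := by
    rw [hy_dec, hxs_dec]
    have h1 : ∀ j : Fin nstar, (δ j - Δ j) • u j = δ j • u j - Δ j • u j :=
      fun j => sub_smul _ _ _
    have h2 : ∀ j : Fin nstar, Δ j • (z - u j) = Δ j • z - Δ j • u j :=
      fun j => smul_sub _ _ _
    simp only [h1, h2, Finset.sum_sub_distrib, ← Finset.sum_smul]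
    abel
  -- key inequality: g ≤ (∑ Δ) * G
  have hkey : g ≤ (∑ j, Δ j) * G := by
    have h1 : g ≤ ⟪gr, y - xs⟫ := grad_ineq_aux Q hQconv hQdiff xs y
    have h2 : ⟪gr, y - xs⟫ = ∑ j, Δ j * ⟪z - u j, gr⟫ := by
      rw [real_inner_comm, hyxs, sum_inner]
      exact Finset.sum_congr rfl fun j _ => real_inner_smul_left _ _ _
    have h3 : ∀ j : Fin nstar, Δ j * ⟪z - u j, gr⟫ ≤ Δ j * G := by
      intro j
      apply mul_le_mul_of_nonneg_left _ (hΔ j).1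
      rw [inner_sub_left, hGdef, inner_sub_left]
      have := hwp (u j) (huV j)
      linarith [hz_in]
    calc g ≤ ∑ j, Δ j * ⟪z - u j, gr⟫ := by rw [← h2]; exact h1
      _ ≤ ∑ j, Δ j * G := Finset.sum_le_sum fun j _ => h3 j
      _ = (∑ j, Δ j) * G := (Finset.sum_mul _ _ _).symm
  -- norm bound
  have hFb : F y - F xs ≤ 2 * g := by rw [hgdef]; linarith
  have hnorm2 : ‖y - xs‖ ^ 2 ≤ 4 * g / α := by
    calc ‖y - xs‖ ^ 2 ≤ (2 / α) * (F y - F xs) := hQG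
      _ ≤ (2 / α) * (2 * g) := by
          apply mul_le_mul_of_nonneg_left hFb (by positivity)
      _ = 4 * g / α := by ring
  have hnorm : ‖y - xs‖ ≤ Real.sqrt (4 * g / α) := by
    have := Real.sqrt_le_sqrt hnorm2
    rwa [Real.sqrt_sq (norm_nonneg _)] at this
  -- combine
  have hchain : g ≤ Real.sqrt (nstar : ℝ) * Real.sqrt (4 * g / α) * G := by
    calc g ≤ (∑ j, Δ j) * G := hkey
      _ ≤ (Real.sqrt (nstar : ℝ) * ‖y - xs‖) * G :=
          mul_le_mul_of_nonneg_right hΔsum hG0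
      _ ≤ Real.sqrt (nstar : ℝ) * Real.sqrt (4 * g / α) * G := by
          apply mul_le_mul_of_nonneg_right _ hG0
          exact mul_le_mul_of_nonneg_left hnorm (Real.sqrt_nonneg _)
  rcases eq_or_lt_of_le hg0 with h | h
  · rw [← h, mul_zero, Real.sqrt_zero]; exact hG0
  · set K : ℝ := Real.sqrt (nstar : ℝ) * Real.sqrt (4 * g / α) with hK
    have hKpos : 0 < K := by
      apply mul_pos <;> exact Real.sqrt_pos.mpr (by positivity)
    have hcK : Real.sqrt ((α / (4 * (nstar : ℝ))) * g) * K = g := by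
      rw [hK, ← Real.sqrt_mul (by positivity : (0:ℝ) ≤ (nstar : ℝ)),
        ← Real.sqrt_mul (by positivity : (0:ℝ) ≤ α / (4 * (nstar : ℝ)) * g)]
      rw [show (α / (4 * (nstar : ℝ))) * g * ((nstar : ℝ) * (4 * g / α)) = g ^ 2 by
        field_simp]
      exact Real.sqrt_sq hg0
    have : Real.sqrt ((α / (4 * (nstar : ℝ))) * g) * K ≤ G * K := by
      rw [hcK]; calc g ≤ K * G := hchain
        _ = G * K := mul_comm _ _
    exact le_of_mul_le_mul_right this hKpos
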